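/- Suppose for each client k the gradient of F_k satisfies the dissimilarity bound Σ_k p_k ‖∇F_k(w)‖² ≤ M² + B²‖∇f(w)‖² where f = Σ_k p_k F_k, and define the regularized local gradient ∇F_k^λ(Φ,θ) = ∇F_k(Φ,θ) + (0, λθ). If ‖∇_θ f(Φ,θ)‖_F ≤ G and ‖θ‖_F ≤ B_θ, then Σ_k p_k ‖∇F_k^λ(Φ,θ)‖² ≤ M² + 2(B² - 1)λ G B_θ + B² ‖∇f_λ(Φ,θ)‖², where ∇f_λ(Φ,θ) = ∇f(Φ,θ) + (0, λθ) and B ≥ 1. -/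

import Mathlib

theorem stmt14 {P V : Type*} [NormedAddCommGroup P] [InnerProductSpace ℝ P]
    [NormedAddCommGroup V] [InnerProductSpace ℝ V] {K : ℕ}
    (p : Fin K → ℝ) (hp : ∀ k, 0 ≤ p k) (hpsum : ∑ k, p k = 1)
    (gFΦ : Fin K → P → V → P) (gFθ : Fin K → P → V → V)
    (M B lam G Bθ : ℝ) (hM : 0 ≤ M) (hB : 1 ≤ B) (hlam : 0 < lam)
    (hG : 0 < G) (hBθ : 0 < Bθ)
    (hdissim : ∀ Φ θ,
      (∑ k, p k * (‖gFΦ k Φ θ‖ ^ 2 + ‖gFθ k Φ θ‖ ^ 2))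
        ≤ M ^ 2 + B ^ 2 * (‖∑ k, p k • gFΦ k Φ θ‖ ^ 2 + ‖∑ k, p k • gFθ k Φ θ‖ ^ 2))
    (Φ : P) (θ : V)
    (hGb : ‖∑ k, p k • gFθ k Φ θ‖ ≤ G) (hθb : ‖θ‖ ≤ Bθ) :
    (∑ k, p k * (‖gFΦ k Φ θ‖ ^ 2 + ‖gFθ k Φ θ + lam • θ‖ ^ 2))
      ≤ M ^ 2 + 2 * (B ^ 2 - 1) * lam * G * Bθ
        + B ^ 2 * (‖∑ k, p k • gFΦ k Φ θ‖ ^ 2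
            + ‖(∑ k, p k • gFθ k Φ θ) + lam • θ‖ ^ 2) := by
  set g : V := ∑ k, p k • gFθ k Φ θ with hg
  have key : ∀ a : V, ‖a + lam • θ‖ ^ 2
      = ‖a‖ ^ 2 + 2 * lam * (inner ℝ a θ : ℝ) + lam ^ 2 * ‖θ‖ ^ 2 := by
    intro a
    rw [norm_add_sq_real, real_inner_smul_right, norm_smul, Real.norm_eq_abs,
      abs_of_pos hlam, mul_pow]
    ring
  have hinner : (inner ℝ g θ : ℝ) = ∑ k, p k * (inner ℝ (gFθ k Φ θ) θ : ℝ) := by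
    rw [hg, sum_inner]
    simp [real_inner_smul_left]
  have hsum : ∑ k, p k * (‖gFΦ k Φ θ‖ ^ 2 + ‖gFθ k Φ θ + lam • θ‖ ^ 2)
      = (∑ k, p k * (‖gFΦ k Φ θ‖ ^ 2 + ‖gFθ k Φ θ‖ ^ 2))
        + 2 * lam * (inner ℝ g θ : ℝ) + lam ^ 2 * ‖θ‖ ^ 2 := by
    have h1 : ∀ k, p k * (‖gFΦ k Φ θ‖ ^ 2 + ‖gFθ k Φ θ + lam • θ‖ ^ 2)
        = p k * (‖gFΦ k Φ θ‖ ^ 2 + ‖gFθ k Φ θ‖ ^ 2)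
          + 2 * lam * (p k * (inner ℝ (gFθ k Φ θ) θ : ℝ))
          + p k * (lam ^ 2 * ‖θ‖ ^ 2) := by
      intro k; rw [key]; ring
    rw [Finset.sum_congr rfl (fun k _ => h1 k), Finset.sum_add_distrib,
      Finset.sum_add_distrib, ← Finset.mul_sum, ← hinner, ← Finset.sum_mul, hpsum]
    ring
  have hcs : (inner ℝ g θ : ℝ) ≥ -(G * Bθ) := by
    have h1 := abs_real_inner_le_norm g θ
    have h2 : ‖g‖ * ‖θ‖ ≤ G * Bθ :=
      mul_le_mul hGb hθb (norm_nonneg _) hG.le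
    have := neg_abs_le (inner ℝ g θ : ℝ)
    linarith [abs_nonneg (inner ℝ g θ : ℝ)]
  have hexp : ‖g + lam • θ‖ ^ 2
      = ‖g‖ ^ 2 + 2 * lam * (inner ℝ g θ : ℝ) + lam ^ 2 * ‖θ‖ ^ 2 := key g
  have hd := hdissim Φ θ
  rw [hsum, hexp]
  have hB2 : (0 : ℝ) ≤ B ^ 2 - 1 := by nlinarith
  nlinarith [sq_nonneg ‖θ‖, mul_nonneg (mul_nonneg hB2 hlam.le)
    (add_nonneg (mul_nonneg (mul_nonneg (by norm_num : (0:ℝ) ≤ 2) hG.le) hBθ.le)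
      (mul_nonneg hlam.le (sq_nonneg ‖θ‖))), sq_nonneg ‖θ‖,
    mul_nonneg hB2 (mul_nonneg hlam.le (sq_nonneg ‖θ‖)),
    mul_le_mul_of_nonneg_left (neg_le_iff_add_nonneg.mp (by linarith [hcs] : -(inner ℝ g θ : ℝ) ≤ G * Bθ)) (mul_nonneg hB2 hlam.le)]
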